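/- Let C be a category, let n ≥ 2, and let (T_0, η^0, μ^0), …, (T_n, η^n, μ^n) be monads on C equipped, for every pair 0 ≤ i < j ≤ n, with a distributive law λ^{ij} of T_i over T_j, such that for every triple 0 ≤ i < j < k ≤ n the Yang–Baxter equation holds. Then for every 1 ≤ i < n: (a) the iterated Beck composites give monad structures on the endofunctors X ↦ T_i(T_{i-1}(⋯T_0(X)⋯)) and X ↦ T_n(T_{n-1}(⋯T_{i+1}(X)⋯)); (b) the composite of the components of the λ^{jk} (for j ≤ i < k) defines a distributive law of the monad T_i∘T_{i-1}∘⋯∘T_0 over the monad T_n∘T_{n-1}∘⋯∘T_{i+1}; and (c) the monad structure induced on the endofunctor X ↦ T_n(T_{n-1}(⋯T_0(X)⋯)) by any such combination of the structure maps of the monads and the distributive laws is the same, i.e. independent of i. -/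

import Mathlib

open CategoryTheory

universe v u

variable {C : Type u} [Category.{v} C]

/-- The data `ℓ_X : Tf (Sf X) ⟶ Sf (Tf X)` is a distributive law of the monad structure
`(Tf, ηT, μT)` over the monad structure `(Sf, ηS, μS)`: it is natural and it satisfies the
four compatibility axioms with the units and the multiplications. -/
def IsDistribLawData (Tf Sf : C ⥤ C)
    (ηT : ∀ X : C, X ⟶ Tf.obj X) (μT : ∀ X : C, Tf.obj (Tf.obj X) ⟶ Tf.obj X)
    (ηS : ∀ X : C, X ⟶ Sf.obj X) (μS : ∀ X : C, Sf.obj (Sf.obj X) ⟶ Sf.obj X)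
    (ℓ : ∀ X : C, Tf.obj (Sf.obj X) ⟶ Sf.obj (Tf.obj X)) : Prop :=
  (∀ {X Y : C} (f : X ⟶ Y), Tf.map (Sf.map f) ≫ ℓ Y = ℓ X ≫ Sf.map (Tf.map f)) ∧
  (∀ X : C, ηT (Sf.obj X) ≫ ℓ X = Sf.map (ηT X)) ∧
  (∀ X : C, Tf.map (ηS X) ≫ ℓ X = ηS (Tf.obj X)) ∧
  (∀ X : C, μT (Sf.obj X) ≫ ℓ X = Tf.map (ℓ X) ≫ ℓ (Tf.obj X) ≫ Sf.map (μT X)) ∧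
  (∀ X : C, Tf.map (μS X) ≫ ℓ X = ℓ (Sf.obj X) ≫ Sf.map (ℓ X) ≫ μS (Tf.obj X))

/-- `ℓ` is a distributive law of the monad `T` over the monad `S`. -/
def IsMonadDistribLaw (T S : Monad C)
    (ℓ : ∀ X : C, T.obj (S.obj X) ⟶ S.obj (T.obj X)) : Prop :=
  IsDistribLawData T.toFunctor S.toFunctor
    (fun X => T.η.app X) (fun X => T.μ.app X)
    (fun X => S.η.app X) (fun X => S.μ.app X) ℓ

/-- The Yang–Baxter equation for three distributive laws between the monads `T₀`, `T₁`, `T₂`. -/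
def YangBaxter (T0 T1 T2 : Monad C)
    (l01 : ∀ X : C, T0.obj (T1.obj X) ⟶ T1.obj (T0.obj X))
    (l02 : ∀ X : C, T0.obj (T2.obj X) ⟶ T2.obj (T0.obj X))
    (l12 : ∀ X : C, T1.obj (T2.obj X) ⟶ T2.obj (T1.obj X)) : Prop :=
  ∀ X : C, l01 (T2.obj X) ≫ T1.map (l02 X) ≫ l12 (T0.obj X)
    = T0.map (l12 X) ≫ l02 (T1.obj X) ≫ T2.map (l01 X)

/-- The data `(F, η, μ)` satisfies all the axioms of a monad structure on the
endofunctor `F`: `η` and `μ` are natural and the unit and associativity laws hold. -/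
def IsMonadStructure (F : C ⥤ C) (η : ∀ X : C, X ⟶ F.obj X)
    (μ : ∀ X : C, F.obj (F.obj X) ⟶ F.obj X) : Prop :=
  (∀ {X Y : C} (f : X ⟶ Y), f ≫ η Y = η X ≫ F.map f) ∧
  (∀ {X Y : C} (f : X ⟶ Y), F.map (F.map f) ≫ μ Y = μ X ≫ F.map f) ∧
  (∀ X : C, η (F.obj X) ≫ μ X = 𝟙 (F.obj X)) ∧
  (∀ X : C, F.map (η X) ≫ μ X = 𝟙 (F.obj X)) ∧
  (∀ X : C, F.map (μ X) ≫ μ X = μ (F.obj X) ≫ μ X)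

/-- The composite endofunctor `X ↦ Tᵢ(Tᵢ₋₁(⋯ T₀(X) ⋯))`. -/
def lowFun (T : ℕ → Monad C) : ℕ → C ⥤ C
  | 0 => (T 0).toFunctor
  | i + 1 => lowFun T i ⋙ (T (i + 1)).toFunctor

/-- The iterated Beck unit of the composite `Tᵢ ∘ ⋯ ∘ T₀`. -/
def lowUnit (T : ℕ → Monad C) : (i : ℕ) → ∀ X : C, X ⟶ (lowFun T i).obj X
  | 0, X => (T 0).η.app X
  | i + 1, X => (T (i + 1)).η.app X ≫ (T (i + 1)).map (lowUnit T i X)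

/-- The composite distributive law of `Tᵢ ∘ ⋯ ∘ T₀` over `T k`, given by composites of the
laws `λ^{j,k}` for `j ≤ i`. -/
def lowLaw (T : ℕ → Monad C)
    (ℓ : ∀ i j : ℕ, ∀ X : C, (T i).obj ((T j).obj X) ⟶ (T j).obj ((T i).obj X))
    (k : ℕ) : (i : ℕ) → ∀ X : C,
      (lowFun T i).obj ((T k).obj X) ⟶ (T k).obj ((lowFun T i).obj X)
  | 0, X => ℓ 0 k X
  | i + 1, X =>
      (T (i + 1)).map (lowLaw T ℓ k i X) ≫ ℓ (i + 1) k ((lowFun T i).obj X)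

/-- The iterated Beck multiplication of the composite `Tᵢ ∘ ⋯ ∘ T₀`. -/
def lowMul (T : ℕ → Monad C)
    (ℓ : ∀ i j : ℕ, ∀ X : C, (T i).obj ((T j).obj X) ⟶ (T j).obj ((T i).obj X)) :
    (i : ℕ) → ∀ X : C, (lowFun T i).obj ((lowFun T i).obj X) ⟶ (lowFun T i).obj X
  | 0, X => (T 0).μ.app X
  | i + 1, X =>
      (T (i + 1)).map (lowLaw T ℓ (i + 1) i ((lowFun T i).obj X))
        ≫ (T (i + 1)).μ.app ((lowFun T i).obj ((lowFun T i).obj X))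
        ≫ (T (i + 1)).map (lowMul T ℓ i X)

/-- The composite endofunctor `X ↦ T_{a+m}(T_{a+m-1}(⋯ T_a(X) ⋯))`. -/
def upFun (T : ℕ → Monad C) (a : ℕ) : ℕ → C ⥤ C
  | 0 => (T a).toFunctor
  | m + 1 => upFun T a m ⋙ (T (a + m + 1)).toFunctor

/-- The iterated Beck unit of the composite `T_{a+m} ∘ ⋯ ∘ T_a`. -/
def upUnit (T : ℕ → Monad C) (a : ℕ) : (m : ℕ) → ∀ X : C, X ⟶ (upFun T a m).obj X
  | 0, X => (T a).η.app X
  | m + 1, X => (T (a + m + 1)).η.app X ≫ (T (a + m + 1)).map (upUnit T a m X)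

/-- The composite distributive law of `T_{a+m} ∘ ⋯ ∘ T_a` over `T k`. -/
def upLaw (T : ℕ → Monad C)
    (ℓ : ∀ i j : ℕ, ∀ X : C, (T i).obj ((T j).obj X) ⟶ (T j).obj ((T i).obj X))
    (a k : ℕ) : (m : ℕ) → ∀ X : C,
      (upFun T a m).obj ((T k).obj X) ⟶ (T k).obj ((upFun T a m).obj X)
  | 0, X => ℓ a k X
  | m + 1, X =>
      (T (a + m + 1)).map (upLaw T ℓ a k m X) ≫ ℓ (a + m + 1) k ((upFun T a m).obj X)

/-- The iterated Beck multiplication of the composite `T_{a+m} ∘ ⋯ ∘ T_a`. -/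
def upMul (T : ℕ → Monad C)
    (ℓ : ∀ i j : ℕ, ∀ X : C, (T i).obj ((T j).obj X) ⟶ (T j).obj ((T i).obj X))
    (a : ℕ) : (m : ℕ) → ∀ X : C,
      (upFun T a m).obj ((upFun T a m).obj X) ⟶ (upFun T a m).obj X
  | 0, X => (T a).μ.app X
  | m + 1, X =>
      (T (a + m + 1)).map (upLaw T ℓ a (a + m + 1) m ((upFun T a m).obj X))
        ≫ (T (a + m + 1)).μ.app ((upFun T a m).obj ((upFun T a m).obj X))
        ≫ (T (a + m + 1)).map (upMul T ℓ a m X)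

/-- The composite distributive law of a single monad `T j` over `T_{a+m} ∘ ⋯ ∘ T_a`. -/
def overUpLaw (T : ℕ → Monad C)
    (ℓ : ∀ i j : ℕ, ∀ X : C, (T i).obj ((T j).obj X) ⟶ (T j).obj ((T i).obj X))
    (j a : ℕ) : (m : ℕ) → ∀ X : C,
      (T j).obj ((upFun T a m).obj X) ⟶ (upFun T a m).obj ((T j).obj X)
  | 0, X => ℓ j a X
  | m + 1, X =>
      ℓ j (a + m + 1) ((upFun T a m).obj X) ≫ (T (a + m + 1)).map (overUpLaw T ℓ j a m X)

/-- The composite distributive law of `Tᵢ ∘ ⋯ ∘ T₀` over `T_{a+m} ∘ ⋯ ∘ T_a`, given by the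
composites of the laws `λ^{j,k}` with `j ≤ i` and `a ≤ k ≤ a + m`. -/
def lowUpLaw (T : ℕ → Monad C)
    (ℓ : ∀ i j : ℕ, ∀ X : C, (T i).obj ((T j).obj X) ⟶ (T j).obj ((T i).obj X))
    (a m : ℕ) : (i : ℕ) → ∀ X : C,
      (lowFun T i).obj ((upFun T a m).obj X) ⟶ (upFun T a m).obj ((lowFun T i).obj X)
  | 0, X => overUpLaw T ℓ 0 a m X
  | i + 1, X =>
      (T (i + 1)).map (lowUpLaw T ℓ a m i X)
        ≫ overUpLaw T ℓ (i + 1) a m ((lowFun T i).obj X)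

attribute [reducible] lowFun upFun

/-- Abstract Yang–Baxter for three endofunctors with given "laws". -/
def YBData (Af Bf Kf : C ⥤ C)
    (lab : ∀ X : C, Af.obj (Bf.obj X) ⟶ Bf.obj (Af.obj X))
    (lak : ∀ X : C, Af.obj (Kf.obj X) ⟶ Kf.obj (Af.obj X))
    (lbk : ∀ X : C, Bf.obj (Kf.obj X) ⟶ Kf.obj (Bf.obj X)) : Prop :=
  ∀ X : C, lab (Kf.obj X) ≫ Bf.map (lak X) ≫ lbk (Af.obj X)
    = Af.map (lbk X) ≫ lak (Bf.obj X) ≫ Kf.map (lab X)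

section Abstract

variable {Af Bf Kf : C ⥤ C}
variable {ηA : ∀ X : C, X ⟶ Af.obj X} {μA : ∀ X : C, Af.obj (Af.obj X) ⟶ Af.obj X}
variable {ηB : ∀ X : C, X ⟶ Bf.obj X} {μB : ∀ X : C, Bf.obj (Bf.obj X) ⟶ Bf.obj X}
variable {ηK : ∀ X : C, X ⟶ Kf.obj X} {μK : ∀ X : C, Kf.obj (Kf.obj X) ⟶ Kf.obj X}

/-- Beck: composite monad structure on `Af ⋙ Bf` (monad `B ∘ A`). -/
theorem beck {ℓ : ∀ X : C, Af.obj (Bf.obj X) ⟶ Bf.obj (Af.obj X)}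
    (hA : IsMonadStructure Af ηA μA) (hB : IsMonadStructure Bf ηB μB)
    (hl : IsDistribLawData Af Bf ηA μA ηB μB ℓ) :
    IsMonadStructure (Af ⋙ Bf) (fun X => ηB X ≫ Bf.map (ηA X))
      (fun X => Bf.map (ℓ (Af.obj X)) ≫ μB (Af.obj (Af.obj X)) ≫ Bf.map (μA X)) := by
  obtain ⟨hAη, hAμ, hAlu, hAru, hAas⟩ := hA
  obtain ⟨hBη, hBμ, hBlu, hBru, hBas⟩ := hB
  obtain ⟨lnat, l1, l2, l3, l4⟩ := hl
  refine ⟨?_, ?_, ?_, ?_, ?_⟩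
  · intro X Y f
    simp only [Functor.comp_obj, Functor.comp_map]
    rw [reassoc_of% (hBη f), ← Functor.map_comp, hAη f, Functor.map_comp]
    simp only [Category.assoc]
  · intro X Y f
    simp only [Functor.comp_obj, Functor.comp_map]
    rw [← Functor.map_comp_assoc Bf _ (ℓ (Af.obj Y)), lnat (Af.map f), Functor.map_comp_assoc,
      reassoc_of% (hBμ (Af.map (Af.map f))), ← Functor.map_comp, hAμ f, Functor.map_comp,
      Category.assoc, Category.assoc]
  · intro X
    simp only [Functor.comp_obj]
    rw [Category.assoc, ← Functor.map_comp_assoc, l1, reassoc_of% (hBμ (ηA (Af.obj X))),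
      reassoc_of% (hBlu (Af.obj X)), ← Functor.map_comp, hAlu, CategoryTheory.Functor.map_id]
  · intro X
    simp only [Functor.comp_obj, Functor.comp_map]
    simp only [Functor.map_comp, Category.assoc]
    rw [← Functor.map_comp_assoc Bf (Af.map (Bf.map (ηA X))) (ℓ (Af.obj X)), lnat (ηA X),
      Functor.map_comp_assoc, ← Functor.map_comp_assoc Bf (Af.map (ηB X)), l2,
      reassoc_of% (hBμ (Af.map (ηA X))), reassoc_of% (hBru (Af.obj X)),
      ← Functor.map_comp, hAru, CategoryTheory.Functor.map_id]
  · intro X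
    simp only [Functor.comp_obj, Functor.comp_map, Functor.map_comp, Category.assoc]
    rw [← Functor.map_comp_assoc Bf (Af.map (Bf.map (μA X))) (ℓ (Af.obj X)), lnat (μA X),
      Functor.map_comp_assoc,
      ← Functor.map_comp_assoc Bf (Af.map (μB (Af.obj (Af.obj X)))) (ℓ (Af.obj (Af.obj X))),
      l4 (Af.obj (Af.obj X))]
    simp only [Functor.map_comp, Category.assoc]
    rw [← Functor.map_comp_assoc Bf (μB (Af.obj (Af.obj (Af.obj X)))) (Bf.map (Af.map (μA X))),
      ← hBμ (Af.map (μA X)), Functor.map_comp_assoc,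
      reassoc_of% (hBas (Af.obj (Af.obj X))),
      reassoc_of% (hBμ (Bf.map (Af.map (μA X)))),
      reassoc_of% (hBμ (ℓ (Af.obj (Af.obj X)))),
      ← Functor.map_comp_assoc Bf (Af.map (Bf.map (ℓ (Af.obj X))))
        (ℓ (Bf.obj (Af.obj (Af.obj X)))), lnat (ℓ (Af.obj X)), Functor.map_comp_assoc,
      reassoc_of% (hBμ (Af.map (ℓ (Af.obj X)))),
      reassoc_of% (hBμ (Af.map (μA X))),
      ← Functor.map_comp Bf (Af.map (μA X)) (μA X), hAas X, Functor.map_comp,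
      ← Functor.map_comp_assoc Bf (μA (Bf.obj (Af.obj X))) (ℓ (Af.obj X)), l3 (Af.obj X)]
    simp only [Functor.map_comp, Category.assoc]
    rw [reassoc_of% (hBμ (μA (Af.obj X)))]

/-- The composite Beck monad structure `B ∘ A` distributes over `K`. -/
theorem leftCompLaw {lab : ∀ X : C, Af.obj (Bf.obj X) ⟶ Bf.obj (Af.obj X)}
    {lak : ∀ X : C, Af.obj (Kf.obj X) ⟶ Kf.obj (Af.obj X)}
    {lbk : ∀ X : C, Bf.obj (Kf.obj X) ⟶ Kf.obj (Bf.obj X)}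
    (hab : IsDistribLawData Af Bf ηA μA ηB μB lab)
    (hak : IsDistribLawData Af Kf ηA μA ηK μK lak)
    (hbk : IsDistribLawData Bf Kf ηB μB ηK μK lbk)
    (hyb : YBData Af Bf Kf lab lak lbk)
    (hB : IsMonadStructure Bf ηB μB) :
    IsDistribLawData (Af ⋙ Bf) Kf (fun X => ηB X ≫ Bf.map (ηA X))
      (fun X => Bf.map (lab (Af.obj X)) ≫ μB (Af.obj (Af.obj X)) ≫ Bf.map (μA X))
      ηK μK (fun X => Bf.map (lak X) ≫ lbk (Af.obj X)) := by
  obtain ⟨hBη, hBμ, hBlu, hBru, hBas⟩ := hB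
  obtain ⟨abnat, ab1, ab2, ab4, ab5⟩ := hab
  obtain ⟨aknat, ak1, ak2, ak4, ak5⟩ := hak
  obtain ⟨bknat, bk1, bk2, bk4, bk5⟩ := hbk
  refine ⟨?_, ?_, ?_, ?_, ?_⟩
  · intro X Y f
    simp only [Functor.comp_obj, Functor.comp_map, Category.assoc]
    rw [← Functor.map_comp_assoc Bf (Af.map (Kf.map f)) (lak Y), aknat f,
      Functor.map_comp_assoc, bknat (Af.map f)]
  · intro X
    simp only [Functor.comp_obj, Category.assoc]
    rw [← Functor.map_comp_assoc Bf (ηA (Kf.obj X)) (lak X), ak1,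
      bknat (ηA X), reassoc_of% (bk1 X), ← Functor.map_comp]
  · intro X
    simp only [Functor.comp_obj, Functor.comp_map, Category.assoc]
    rw [← Functor.map_comp_assoc Bf (Af.map (ηK X)) (lak X), ak2, bk2]
  · intro X
    simp only [Functor.comp_obj, Functor.comp_map, Functor.map_comp, Category.assoc]
    rw [← Functor.map_comp_assoc Bf (μA (Kf.obj X)) (lak X), ak4 X]
    simp only [Functor.map_comp, Category.assoc]
    rw [bknat (μA X), ← reassoc_of% (hBμ (Af.map (lak X))),
      ← reassoc_of% (hBμ (lak (Af.obj X))),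
      reassoc_of% (bk4 (Af.obj (Af.obj X))),
      ← Functor.map_comp_assoc Bf (Bf.map (lak (Af.obj X))) (lbk (Af.obj (Af.obj X))),
      ← Functor.map_comp_assoc Bf (Bf.map (Af.map (lak X))),
      ← Functor.map_comp_assoc Bf (lab (Af.obj (Kf.obj X))),
      ← reassoc_of% (abnat (lak X)), hyb (Af.obj X)]
    simp only [Functor.map_comp, Category.assoc]
    rw [reassoc_of% (bknat (lab (Af.obj X)))]
  · intro X
    simp only [Functor.comp_obj, Functor.comp_map, Functor.map_comp, Category.assoc]
    rw [← Functor.map_comp_assoc Bf (Af.map (μK X)) (lak X), ak5 X]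
    simp only [Functor.map_comp, Category.assoc]
    rw [bk5 (Af.obj X), reassoc_of% (bknat (lak X))]

/-- A monad `K` distributes over the composite Beck monad `B ∘ A`. -/
theorem rightCompLaw {lka : ∀ X : C, Kf.obj (Af.obj X) ⟶ Af.obj (Kf.obj X)}
    {lkb : ∀ X : C, Kf.obj (Bf.obj X) ⟶ Bf.obj (Kf.obj X)}
    {lab : ∀ X : C, Af.obj (Bf.obj X) ⟶ Bf.obj (Af.obj X)}
    (hka : IsDistribLawData Kf Af ηK μK ηA μA lka)
    (hkb : IsDistribLawData Kf Bf ηK μK ηB μB lkb)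
    (hab : IsDistribLawData Af Bf ηA μA ηB μB lab)
    (hyb : YBData Kf Af Bf lka lkb lab)
    (hB : IsMonadStructure Bf ηB μB) :
    IsDistribLawData Kf (Af ⋙ Bf) ηK μK (fun X => ηB X ≫ Bf.map (ηA X))
      (fun X => Bf.map (lab (Af.obj X)) ≫ μB (Af.obj (Af.obj X)) ≫ Bf.map (μA X))
      (fun X => lkb (Af.obj X) ≫ Bf.map (lka X)) := by
  obtain ⟨hBη, hBμ, hBlu, hBru, hBas⟩ := hB
  obtain ⟨abnat, ab1, ab2, ab4, ab5⟩ := hab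
  obtain ⟨kanat, ka1, ka2, ka4, ka5⟩ := hka
  obtain ⟨kbnat, kb1, kb2, kb4, kb5⟩ := hkb
  refine ⟨?_, ?_, ?_, ?_, ?_⟩
  · intro X Y f
    simp only [Functor.comp_obj, Functor.comp_map, Category.assoc]
    rw [reassoc_of% (kbnat (Af.map f)), ← Functor.map_comp, kanat f, Functor.map_comp]
  · intro X
    simp only [Functor.comp_obj, Functor.comp_map, Category.assoc]
    rw [reassoc_of% (kb1 (Af.obj X)), ← Functor.map_comp, ka1]
  · intro X
    simp only [Functor.comp_obj, Functor.comp_map, Functor.map_comp, Category.assoc]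
    rw [reassoc_of% (kbnat (ηA X)), reassoc_of% (kb2 X), ← Functor.map_comp, ka2]
  · intro X
    simp only [Functor.comp_obj, Functor.comp_map, Functor.map_comp, Category.assoc]
    rw [reassoc_of% (kb4 (Af.obj X)), ← Functor.map_comp Bf (μK (Af.obj X)) (lka X),
      ka4 X]
    simp only [Functor.map_comp, Category.assoc]
    rw [← reassoc_of% (kbnat (lka X))]
  · intro X
    simp only [Functor.comp_obj, Functor.comp_map, Functor.map_comp, Category.assoc]
    rw [reassoc_of% (kbnat (μA X)), ← Functor.map_comp Bf (Kf.map (μA X)) (lka X), ka5 X]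
    simp only [Functor.map_comp, Category.assoc]
    rw [reassoc_of% (kb5 (Af.obj (Af.obj X))), ← reassoc_of% (hBμ (lka (Af.obj X))),
      ← reassoc_of% (hBμ (Af.map (lka X))), reassoc_of% (kbnat (lab (Af.obj X))),
      ← Functor.map_comp_assoc Bf (Bf.map (lka (Af.obj X))) (Bf.map (Af.map (lka X))),
      ← Functor.map_comp_assoc Bf (lkb (Af.obj (Af.obj X))),
      ← Functor.map_comp_assoc Bf (Kf.map (lab (Af.obj X))),
      ← reassoc_of% (hyb (Af.obj X)), ← abnat (lka X)]
    simp only [Functor.map_comp, Category.assoc]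

/-- Yang–Baxter when the first monad is a Beck composite. -/
theorem ybCompLeft {A0f A1f : C ⥤ C}
    {l0b : ∀ X : C, A0f.obj (Bf.obj X) ⟶ Bf.obj (A0f.obj X)}
    {l1b : ∀ X : C, A1f.obj (Bf.obj X) ⟶ Bf.obj (A1f.obj X)}
    {l0k : ∀ X : C, A0f.obj (Kf.obj X) ⟶ Kf.obj (A0f.obj X)}
    {l1k : ∀ X : C, A1f.obj (Kf.obj X) ⟶ Kf.obj (A1f.obj X)}
    {lbk : ∀ X : C, Bf.obj (Kf.obj X) ⟶ Kf.obj (Bf.obj X)}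
    (n1b : ∀ {X Y : C} (f : X ⟶ Y), A1f.map (Bf.map f) ≫ l1b Y = l1b X ≫ Bf.map (A1f.map f))
    (n1k : ∀ {X Y : C} (f : X ⟶ Y), A1f.map (Kf.map f) ≫ l1k Y = l1k X ≫ Kf.map (A1f.map f))
    (yb0 : YBData A0f Bf Kf l0b l0k lbk) (yb1 : YBData A1f Bf Kf l1b l1k lbk) :
    YBData (A0f ⋙ A1f) Bf Kf
      (fun X => A1f.map (l0b X) ≫ l1b (A0f.obj X))
      (fun X => A1f.map (l0k X) ≫ l1k (A0f.obj X)) lbk := by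
  intro X
  simp only [Functor.comp_obj, Functor.comp_map, Functor.map_comp, Category.assoc]
  rw [← reassoc_of% (n1b (l0k X)), yb1 (A0f.obj X),
    ← Functor.map_comp_assoc A1f (Bf.map (l0k X)) (lbk (A0f.obj X)),
    ← Functor.map_comp_assoc A1f (l0b (Kf.obj X)), yb0 X]
  simp only [Functor.map_comp, Category.assoc]
  rw [reassoc_of% (n1k (l0b X))]

/-- Yang–Baxter when the middle monad is a Beck composite. -/
theorem ybCompMid {B0f B1f : C ⥤ C}
    {lab0 : ∀ X : C, Af.obj (B0f.obj X) ⟶ B0f.obj (Af.obj X)}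
    {lab1 : ∀ X : C, Af.obj (B1f.obj X) ⟶ B1f.obj (Af.obj X)}
    {lak : ∀ X : C, Af.obj (Kf.obj X) ⟶ Kf.obj (Af.obj X)}
    {lb0k : ∀ X : C, B0f.obj (Kf.obj X) ⟶ Kf.obj (B0f.obj X)}
    {lb1k : ∀ X : C, B1f.obj (Kf.obj X) ⟶ Kf.obj (B1f.obj X)}
    (nab1 : ∀ {X Y : C} (f : X ⟶ Y), Af.map (B1f.map f) ≫ lab1 Y = lab1 X ≫ B1f.map (Af.map f))
    (nb1k : ∀ {X Y : C} (f : X ⟶ Y), B1f.map (Kf.map f) ≫ lb1k Y = lb1k X ≫ Kf.map (B1f.map f))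
    (yb0 : YBData Af B0f Kf lab0 lak lb0k) (yb1 : YBData Af B1f Kf lab1 lak lb1k) :
    YBData Af (B0f ⋙ B1f) Kf
      (fun X => lab1 (B0f.obj X) ≫ B1f.map (lab0 X)) lak
      (fun X => B1f.map (lb0k X) ≫ lb1k (B0f.obj X)) := by
  intro X
  simp only [Functor.comp_obj, Functor.comp_map, Functor.map_comp, Category.assoc]
  rw [← Functor.map_comp_assoc B1f (lab0 (Kf.obj X)) (B0f.map (lak X)),
    ← Functor.map_comp_assoc B1f _ (lb0k (Af.obj X)), Category.assoc, yb0 X]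
  simp only [Functor.map_comp, Category.assoc]
  rw [← reassoc_of% (nab1 (lb0k X)), nb1k (lab0 X), reassoc_of% (yb1 (B0f.obj X))]

/-- Yang–Baxter when the third monad is a Beck composite. -/
theorem ybCompRight {K0f K1f : C ⥤ C}
    {lab : ∀ X : C, Af.obj (Bf.obj X) ⟶ Bf.obj (Af.obj X)}
    {lak0 : ∀ X : C, Af.obj (K0f.obj X) ⟶ K0f.obj (Af.obj X)}
    {lak1 : ∀ X : C, Af.obj (K1f.obj X) ⟶ K1f.obj (Af.obj X)}
    {lbk0 : ∀ X : C, Bf.obj (K0f.obj X) ⟶ K0f.obj (Bf.obj X)}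
    {lbk1 : ∀ X : C, Bf.obj (K1f.obj X) ⟶ K1f.obj (Bf.obj X)}
    (nak1 : ∀ {X Y : C} (f : X ⟶ Y), Af.map (K1f.map f) ≫ lak1 Y = lak1 X ≫ K1f.map (Af.map f))
    (nbk1 : ∀ {X Y : C} (f : X ⟶ Y), Bf.map (K1f.map f) ≫ lbk1 Y = lbk1 X ≫ K1f.map (Bf.map f))
    (yb0 : YBData Af Bf K0f lab lak0 lbk0) (yb1 : YBData Af Bf K1f lab lak1 lbk1) :
    YBData Af Bf (K0f ⋙ K1f) lab
      (fun X => lak1 (K0f.obj X) ≫ K1f.map (lak0 X))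
      (fun X => lbk1 (K0f.obj X) ≫ K1f.map (lbk0 X)) := by
  intro X
  simp only [Functor.comp_obj, Functor.comp_map, Functor.map_comp, Category.assoc]
  rw [reassoc_of% (nbk1 (lak0 X)), reassoc_of% (yb1 (K0f.obj X)),
    ← Functor.map_comp K1f (Bf.map (lak0 X)) (lbk0 (Af.obj X)),
    ← Functor.map_comp K1f (lab (K0f.obj X)), yb0 X]
  simp only [Functor.map_comp, Category.assoc]
  rw [← reassoc_of% (nak1 (lbk0 X))]

end Abstract

section Concrete

variable (n : ℕ) (T : ℕ → Monad C)
  (ℓ : ∀ i j : ℕ, ∀ X : C, (T i).obj ((T j).obj X) ⟶ (T j).obj ((T i).obj X))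

theorem monadStr (M : Monad C) :
    IsMonadStructure M.toFunctor (fun X => M.η.app X) (fun X => M.μ.app X) := by
  refine ⟨fun f => ?_, fun f => ?_, fun X => ?_, fun X => ?_, fun X => ?_⟩
  · simpa using M.η.naturality f
  · simpa using M.μ.naturality f
  · simp
  · simp
  · simpa using M.assoc X

section
variable (hlaw : ∀ i j : ℕ, i < j → j ≤ n → IsMonadDistribLaw (T i) (T j) (ℓ i j))
variable (hYB : ∀ i j k : ℕ, i < j → j < k → k ≤ n →
      YangBaxter (T i) (T j) (T k) (ℓ i j) (ℓ i k) (ℓ j k))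
include hlaw hYB

theorem ybUp : ∀ m a j k, a + m < j → j < k → k ≤ n →
    YBData (upFun T a m) (T j).toFunctor (T k).toFunctor
      (upLaw T ℓ a j m) (upLaw T ℓ a k m) (ℓ j k) := by
  intro m
  induction m with
  | zero => intro a j k h1 h2 h3; exact hYB a j k (by omega) h2 h3
  | succ m ih =>
      intro a j k h1 h2 h3
      exact ybCompLeft (hlaw (a+m+1) j (by omega) (by omega)).1
        (hlaw (a+m+1) k (by omega) h3).1
        (ih a j k (by omega) h2 h3) (hYB (a+m+1) j k (by omega) h2 h3)

theorem upLaw_law : ∀ m a k, a + m < k → k ≤ n →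
    IsDistribLawData (upFun T a m) (T k).toFunctor (upUnit T a m) (upMul T ℓ a m)
      (fun X => (T k).η.app X) (fun X => (T k).μ.app X) (upLaw T ℓ a k m) := by
  intro m
  induction m with
  | zero => intro a k h1 h2; exact hlaw a k (by omega) h2
  | succ m ih =>
      intro a k h1 h2
      exact leftCompLaw (ih a (a+m+1) (by omega) (by omega))
        (ih a k (by omega) h2) (hlaw (a+m+1) k (by omega) h2)
        (ybUp n T ℓ hlaw hYB m a (a+m+1) k (by omega) (by omega) h2)
        (monadStr (T (a+m+1)))

theorem up_monad : ∀ m a, a + m ≤ n →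
    IsMonadStructure (upFun T a m) (upUnit T a m) (upMul T ℓ a m) := by
  intro m
  induction m with
  | zero => intro a _; exact monadStr (T a)
  | succ m ih =>
      intro a h
      exact beck (ih a (by omega)) (monadStr (T (a+m+1)))
        (upLaw_law n T ℓ hlaw hYB m a (a+m+1) (by omega) (by omega))

theorem ybMidUp : ∀ m j a k, j < a → a + m < k → k ≤ n →
    YBData (T j).toFunctor (upFun T a m) (T k).toFunctor
      (overUpLaw T ℓ j a m) (ℓ j k) (upLaw T ℓ a k m) := by
  intro m
  induction m with
  | zero => intro j a k h1 h2 h3; exact hYB j a k h1 (by omega) h3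
  | succ m ih =>
      intro j a k h1 h2 h3
      exact ybCompMid (hlaw j (a+m+1) (by omega) (by omega)).1
        (hlaw (a+m+1) k (by omega) h3).1
        (ih j a k h1 (by omega) h3) (hYB j (a+m+1) k (by omega) (by omega) h3)

theorem overUp_law : ∀ m j a, j < a → a + m ≤ n →
    IsDistribLawData (T j).toFunctor (upFun T a m)
      (fun X => (T j).η.app X) (fun X => (T j).μ.app X)
      (upUnit T a m) (upMul T ℓ a m) (overUpLaw T ℓ j a m) := by
  intro m
  induction m with
  | zero => intro j a h1 h2; exact hlaw j a h1 h2
  | succ m ih =>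
      intro j a h1 h2
      exact rightCompLaw (ih j a h1 (by omega)) (hlaw j (a+m+1) (by omega) h2)
        (upLaw_law n T ℓ hlaw hYB m a (a+m+1) (by omega) h2)
        (ybMidUp n T ℓ hlaw hYB m j a (a+m+1) h1 (by omega) h2)
        (monadStr (T (a+m+1)))

theorem ybRightUp : ∀ m i b a, i < b → b < a → a + m ≤ n →
    YBData (T i).toFunctor (T b).toFunctor (upFun T a m)
      (ℓ i b) (overUpLaw T ℓ i a m) (overUpLaw T ℓ b a m) := by
  intro m
  induction m with
  | zero => intro i b a h1 h2 h3; exact hYB i b a h1 h2 h3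
  | succ m ih =>
      intro i b a h1 h2 h3
      exact ybCompRight (hlaw i (a+m+1) (by omega) h3).1 (hlaw b (a+m+1) (by omega) h3).1
        (ih i b a h1 h2 (by omega)) (hYB i b (a+m+1) h1 (by omega) h3)

theorem ybLow : ∀ i j k, i < j → j < k → k ≤ n →
    YBData (lowFun T i) (T j).toFunctor (T k).toFunctor
      (lowLaw T ℓ j i) (lowLaw T ℓ k i) (ℓ j k) := by
  intro i
  induction i with
  | zero => intro j k h1 h2 h3; exact hYB 0 j k h1 h2 h3
  | succ i ih =>
      intro j k h1 h2 h3
      exact ybCompLeft (hlaw (i+1) j h1 (by omega)).1 (hlaw (i+1) k (by omega) h3).1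
        (ih j k (by omega) h2 h3) (hYB (i+1) j k h1 h2 h3)

theorem lowLaw_law : ∀ i k, i < k → k ≤ n →
    IsDistribLawData (lowFun T i) (T k).toFunctor (lowUnit T i) (lowMul T ℓ i)
      (fun X => (T k).η.app X) (fun X => (T k).μ.app X) (lowLaw T ℓ k i) := by
  intro i
  induction i with
  | zero => intro k h1 h2; exact hlaw 0 k h1 h2
  | succ i ih =>
      intro k h1 h2
      exact leftCompLaw (ih (i+1) (by omega) (by omega)) (ih k (by omega) h2)
        (hlaw (i+1) k h1 h2) (ybLow n T ℓ hlaw hYB i (i+1) k (by omega) h1 h2)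
        (monadStr (T (i+1)))

theorem low_monad : ∀ i, i ≤ n →
    IsMonadStructure (lowFun T i) (lowUnit T i) (lowMul T ℓ i) := by
  intro i
  induction i with
  | zero => intro _; exact monadStr (T 0)
  | succ i ih =>
      intro h
      exact beck (ih (by omega)) (monadStr (T (i+1)))
        (lowLaw_law n T ℓ hlaw hYB i (i+1) (by omega) h)

theorem ybLowUp : ∀ i b a m, i < b → b < a → a + m ≤ n →
    YBData (lowFun T i) (T b).toFunctor (upFun T a m)
      (lowLaw T ℓ b i) (lowUpLaw T ℓ a m i) (overUpLaw T ℓ b a m) := by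
  intro i
  induction i with
  | zero => intro b a m h1 h2 h3; exact ybRightUp n T ℓ hlaw hYB m 0 b a h1 h2 h3
  | succ i ih =>
      intro b a m h1 h2 h3
      exact ybCompLeft (hlaw (i+1) b h1 (by omega)).1
        ((overUp_law n T ℓ hlaw hYB m (i+1) a (by omega) h3).1)
        (ih b a m (by omega) h2 h3)
        (ybRightUp n T ℓ hlaw hYB m (i+1) b a h1 h2 h3)

theorem lowUpLaw_law : ∀ i a m, i < a → a + m ≤ n →
    IsDistribLawData (lowFun T i) (upFun T a m) (lowUnit T i) (lowMul T ℓ i)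
      (upUnit T a m) (upMul T ℓ a m) (lowUpLaw T ℓ a m i) := by
  intro i
  induction i with
  | zero => intro a m h1 h2; exact overUp_law n T ℓ hlaw hYB m 0 a h1 h2
  | succ i ih =>
      intro a m h1 h2
      exact leftCompLaw (lowLaw_law n T ℓ hlaw hYB i (i+1) (by omega) (by omega))
        (ih a m (by omega) h2) (overUp_law n T ℓ hlaw hYB m (i+1) a h1 h2)
        (ybLowUp n T ℓ hlaw hYB i (i+1) a m (by omega) h1 h2)
        (monadStr (T (i+1)))

end

theorem hFun : ∀ (m i : ℕ), lowFun T i ⋙ upFun T (i+1) m = lowFun T (i+1+m)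
  | 0, i => rfl
  | m+1, i => by
      rw [show lowFun T i ⋙ upFun T (i+1) (m+1)
          = (lowFun T i ⋙ upFun T (i+1) m) ⋙ (T (i+1+m+1)).toFunctor from rfl,
        hFun m i]
      rfl

theorem lowUpLaw_zero : ∀ i a (X : C), lowUpLaw T ℓ a 0 i X = lowLaw T ℓ a i X := by
  intro i
  induction i with
  | zero => intro a X; rfl
  | succ i ih =>
      intro a X
      show (T (i+1)).map (lowUpLaw T ℓ a 0 i X) ≫ ℓ (i+1) a _ = _
      rw [ih]; rfl

theorem compatUnit0 : ∀ m i (X : C),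
    upUnit T (i+1) m X ≫ (upFun T (i+1) m).map (lowUnit T i X)
      = lowUnit T (i+1+m) X ≫ eqToHom (Functor.congr_obj (hFun T m i) X).symm := by
  intro m
  induction m with
  | zero => intro i X; exact (Category.comp_id _).symm
  | succ m ih =>
      intro i X
      rw [show upUnit T (i+1) (m+1) X
          = (T (i+1+m+1)).η.app X ≫ (T (i+1+m+1)).map (upUnit T (i+1) m X) from rfl,
        show (upFun T (i+1) (m+1)).map (lowUnit T i X)
          = (T (i+1+m+1)).map ((upFun T (i+1) m).map (lowUnit T i X)) from rfl,
        Category.assoc, ← Functor.map_comp, ih i X]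
      simp only [Functor.map_comp, eqToHom_map]
      rw [← Category.assoc]
      show lowUnit T (i+1+m+1) X ≫ _ = _
      rfl

section
variable (hlaw : ∀ i j : ℕ, i < j → j ≤ n → IsMonadDistribLaw (T i) (T j) (ℓ i j))
include hlaw

theorem lawCompat : ∀ m i k, i+1+m < k → k ≤ n → ∀ X : C,
    (upFun T (i+1) m).map (lowLaw T ℓ k i X) ≫ upLaw T ℓ (i+1) k m ((lowFun T i).obj X)
      = eqToHom (Functor.congr_obj (hFun T m i) ((T k).obj X)) ≫ lowLaw T ℓ k (i+1+m) X
          ≫ eqToHom (congrArg (T k).obj (Functor.congr_obj (hFun T m i) X)).symm := by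
  intro m
  induction m with
  | zero =>
      intro i k h1 h2 X
      rw [show eqToHom (Functor.congr_obj (hFun T 0 i) ((T k).obj X))
          = 𝟙 ((lowFun T i ⋙ upFun T (i+1) 0).obj ((T k).obj X)) from rfl,
        show eqToHom (congrArg (T k).obj (Functor.congr_obj (hFun T 0 i) X)).symm
          = 𝟙 ((T k).obj ((lowFun T (i+1+0)).obj X)) from rfl,
        Category.id_comp, Category.comp_id]
      rfl
  | succ m ih =>
      intro i k h1 h2 X
      rw [show (upFun T (i+1) (m+1)).map (lowLaw T ℓ k i X)
          = (T (i+1+m+1)).map ((upFun T (i+1) m).map (lowLaw T ℓ k i X)) from rfl,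
        show upLaw T ℓ (i+1) k (m+1) ((lowFun T i).obj X)
          = (T (i+1+m+1)).map (upLaw T ℓ (i+1) k m ((lowFun T i).obj X))
              ≫ ℓ (i+1+m+1) k ((upFun T (i+1) m).obj ((lowFun T i).obj X)) from rfl,
        ← Functor.map_comp_assoc (T (i+1+m+1)).toFunctor, ih i k (by omega) h2 X]
      simp only [Functor.map_comp, Category.assoc, eqToHom_map]
      have nat := (hlaw (i+1+m+1) k (by omega) h2).1
        (eqToHom (Functor.congr_obj (hFun T m i) X).symm)
      simp only [eqToHom_map, Functor.comp_obj] at nat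
      rw [nat, show lowLaw T ℓ k (i+1+(m+1)) X
        = (T (i+1+m+1)).map (lowLaw T ℓ k (i+1+m) X)
            ≫ ℓ (i+1+m+1) k ((lowFun T (i+1+m)).obj X) from rfl, Category.assoc]

theorem lowUpLaw_succ : ∀ i a m, i < a → a+m+1 ≤ n → ∀ X : C,
    lowUpLaw T ℓ a (m+1) i X
      = lowLaw T ℓ (a+m+1) i ((upFun T a m).obj X)
          ≫ (T (a+m+1)).map (lowUpLaw T ℓ a m i X) := by
  intro i
  induction i with
  | zero => intro a m h1 h2 X; rfl
  | succ i ih =>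
      intro a m h1 h2 X
      show (T (i+1)).map (lowUpLaw T ℓ a (m+1) i X)
          ≫ ℓ (i+1) (a+m+1) ((upFun T a m).obj ((lowFun T i).obj X))
          ≫ (T (a+m+1)).map (overUpLaw T ℓ (i+1) a m ((lowFun T i).obj X)) = _
      rw [ih a m (by omega) h2 X, Functor.map_comp, Category.assoc]
      have nat := (hlaw (i+1) (a+m+1) (by omega) h2).1 (lowUpLaw T ℓ a m i X)
      rw [reassoc_of% nat, ← Functor.map_comp, ← Category.assoc]
      rfl

end

section
variable (hlaw : ∀ i j : ℕ, i < j → j ≤ n → IsMonadDistribLaw (T i) (T j) (ℓ i j))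
variable (hYB : ∀ i j k : ℕ, i < j → j < k → k ≤ n →
      YangBaxter (T i) (T j) (T k) (ℓ i j) (ℓ i k) (ℓ j k))
include hlaw hYB

theorem compatMul0 : ∀ m i, i+1+m ≤ n → ∀ X : C,
    (upFun T (i+1) m).map (lowUpLaw T ℓ (i+1) m i ((lowFun T i).obj X))
      ≫ upMul T ℓ (i+1) m ((lowFun T i).obj ((lowFun T i).obj X))
      ≫ (upFun T (i+1) m).map (lowMul T ℓ i X)
    = eqToHom ((Functor.congr_obj (hFun T m i) ((lowFun T i ⋙ upFun T (i+1) m).obj X)).trans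
          (congrArg (lowFun T (i+1+m)).obj (Functor.congr_obj (hFun T m i) X)))
        ≫ lowMul T ℓ (i+1+m) X
        ≫ eqToHom (Functor.congr_obj (hFun T m i) X).symm := by
  intro m
  induction m with
  | zero =>
      intro i h X
      rw [lowUpLaw_zero T ℓ,
        show eqToHom ((Functor.congr_obj (hFun T 0 i) ((lowFun T i ⋙ upFun T (i+1) 0).obj X)).trans
            (congrArg (lowFun T (i+1+0)).obj (Functor.congr_obj (hFun T 0 i) X)))
          = 𝟙 ((lowFun T i ⋙ upFun T (i+1) 0).obj ((lowFun T i ⋙ upFun T (i+1) 0).obj X)) from rfl,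
        show eqToHom (Functor.congr_obj (hFun T 0 i) X).symm
          = 𝟙 ((lowFun T (i+1+0)).obj X) from rfl,
        Category.id_comp, Category.comp_id]
      rfl
  | succ m ih =>
      intro i h X
      rw [show (upFun T (i+1) (m+1)).map (lowUpLaw T ℓ (i+1) (m+1) i ((lowFun T i).obj X))
          = (T (i+1+m+1)).map ((upFun T (i+1) m).map
              (lowUpLaw T ℓ (i+1) (m+1) i ((lowFun T i).obj X))) from rfl,
        show upMul T ℓ (i+1) (m+1) ((lowFun T i).obj ((lowFun T i).obj X))
          = (T (i+1+m+1)).map (upLaw T ℓ (i+1) (i+1+m+1) m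
              ((upFun T (i+1) m).obj ((lowFun T i).obj ((lowFun T i).obj X))))
            ≫ (T (i+1+m+1)).μ.app ((upFun T (i+1) m).obj ((upFun T (i+1) m).obj
                ((lowFun T i).obj ((lowFun T i).obj X))))
            ≫ (T (i+1+m+1)).map (upMul T ℓ (i+1) m
                ((lowFun T i).obj ((lowFun T i).obj X))) from rfl,
        show (upFun T (i+1) (m+1)).map (lowMul T ℓ i X)
          = (T (i+1+m+1)).map ((upFun T (i+1) m).map (lowMul T ℓ i X)) from rfl,
        lowUpLaw_succ n T ℓ hlaw i (i+1) m (by omega) (by omega) ((lowFun T i).obj X)]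
      simp only [Functor.map_comp, Category.assoc]
      -- move the mapped law past the up-law by naturality
      have natUp := (upLaw_law n T ℓ hlaw hYB m (i+1) (i+1+m+1) (by omega) (by omega)).1
        (lowUpLaw T ℓ (i+1) m i ((lowFun T i).obj X))
      rw [← Functor.map_comp_assoc (T (i+1+m+1)).toFunctor
        ((upFun T (i+1) m).map ((T (i+1+m+1)).map
          (lowUpLaw T ℓ (i+1) m i ((lowFun T i).obj X)))), natUp]
      simp only [Functor.map_comp, Category.assoc]
      -- move it past μ by naturality of μ
      have natMu := (T (i+1+m+1)).μ.naturality
        ((upFun T (i+1) m).map (lowUpLaw T ℓ (i+1) m i ((lowFun T i).obj X)))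
      simp only [Functor.comp_map] at natMu
      rw [reassoc_of% natMu]
      rw [← Functor.map_comp (T (i+1+m+1)).toFunctor
          (upMul T ℓ (i+1) m ((lowFun T i).obj ((lowFun T i).obj X))),
        ← Functor.map_comp (T (i+1+m+1)).toFunctor
          ((upFun T (i+1) m).map (lowUpLaw T ℓ (i+1) m i ((lowFun T i).obj X))),
        ih i (by omega) X,
        ← Functor.map_comp_assoc (T (i+1+m+1)).toFunctor
          ((upFun T (i+1) m).map (lowLaw T ℓ (i+1+m+1) i
            ((upFun T (i+1) m).obj ((lowFun T i).obj X)))),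
        lawCompat n T ℓ hlaw m i (i+1+m+1) (by omega) (by omega)
          ((upFun T (i+1) m).obj ((lowFun T i).obj X))]
      simp only [Functor.map_comp, Category.assoc, eqToHom_map]
      -- move μ past the eqToHom coming from the inductive hypothesis
      have natMu2 := (T (i+1+m+1)).μ.naturality
        (eqToHom ((Functor.congr_obj (hFun T m i) ((lowFun T i ⋙ upFun T (i+1) m).obj X)).trans
          (congrArg (lowFun T (i+1+m)).obj (Functor.congr_obj (hFun T m i) X))))
      simp only [Functor.comp_map, eqToHom_map] at natMu2
      rw [← reassoc_of% natMu2]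
      simp only [eqToHom_trans_assoc]
      -- move the combined eqToHom past `lowLaw` by naturality
      have natLow := (lowLaw_law n T ℓ hlaw hYB (i+1+m) (i+1+m+1) (by omega) (by omega)).1
        (eqToHom (Functor.congr_obj (hFun T m i) X))
      simp only [Functor.comp_obj, eqToHom_map] at natLow
      have natLow2 := congrArg (T (i+1+m+1)).map natLow
      simp only [Functor.map_comp, eqToHom_map] at natLow2
      rw [← reassoc_of% natLow2]
      simp only [eqToHom_trans_assoc]
      rw [show lowMul T ℓ (i+1+(m+1)) X
        = (T (i+1+m+1)).map (lowLaw T ℓ (i+1+m+1) (i+1+m) ((lowFun T (i+1+m)).obj X))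
          ≫ (T (i+1+m+1)).μ.app ((lowFun T (i+1+m)).obj ((lowFun T (i+1+m)).obj X))
          ≫ (T (i+1+m+1)).map (lowMul T ℓ (i+1+m) X) from rfl]
      simp only [Category.assoc]

end
end Concrete

/-- **Cheng's theorem on distributive series of monads.**  Let `T₀, …, T_n` (`n ≥ 2`) be
monads equipped with distributive laws `λ^{i,j}` of `Tᵢ` over `Tⱼ` for `i < j ≤ n`
satisfying the Yang–Baxter equations.  Then for every `1 ≤ i < n`:
(a) the iterated Beck composites give monad structures on `Tᵢ ∘ ⋯ ∘ T₀` and on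
`T_n ∘ ⋯ ∘ T_{i+1}`;
(b) the composite of the components of the `λ^{j,k}` (for `j ≤ i < k`) is a distributive
law of the monad `Tᵢ ∘ ⋯ ∘ T₀` over the monad `T_n ∘ ⋯ ∘ T_{i+1}`;
(c) the monad structure induced on `T_n ∘ ⋯ ∘ T₀` by the corresponding Beck composite is
independent of `i`: it always agrees (along the canonical identification of the underlying
endofunctors) with the fully iterated structure `(lowFun T n, lowUnit T n, lowMul T ℓ n)`. -/
theorem cheng_distributive_series (n : ℕ) (hn : 2 ≤ n) (T : ℕ → Monad C)
    (ℓ : ∀ i j : ℕ, ∀ X : C, (T i).obj ((T j).obj X) ⟶ (T j).obj ((T i).obj X))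
    (hlaw : ∀ i j : ℕ, i < j → j ≤ n → IsMonadDistribLaw (T i) (T j) (ℓ i j))
    (hYB : ∀ i j k : ℕ, i < j → j < k → k ≤ n →
      YangBaxter (T i) (T j) (T k) (ℓ i j) (ℓ i k) (ℓ j k)) :
    ∀ i : ℕ, 1 ≤ i → i < n →
      -- (a) both iterated Beck composites are monads
      IsMonadStructure (lowFun T i) (lowUnit T i) (lowMul T ℓ i) ∧
      IsMonadStructure (upFun T (i + 1) (n - i - 1)) (upUnit T (i + 1) (n - i - 1))
        (upMul T ℓ (i + 1) (n - i - 1)) ∧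
      -- (b) the composite of the `λ^{j,k}` is a distributive law of
      -- `Tᵢ ∘ ⋯ ∘ T₀` over `T_n ∘ ⋯ ∘ T_{i+1}`
      IsDistribLawData (lowFun T i) (upFun T (i + 1) (n - i - 1))
        (lowUnit T i) (lowMul T ℓ i)
        (upUnit T (i + 1) (n - i - 1)) (upMul T ℓ (i + 1) (n - i - 1))
        (lowUpLaw T ℓ (i + 1) (n - i - 1) i) ∧
      -- (c) the induced Beck composite monad structure on `T_n ∘ ⋯ ∘ T₀` is the fully
      -- iterated one, hence independent of `i`
      ∃ hF : lowFun T i ⋙ upFun T (i + 1) (n - i - 1) = lowFun T n,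
        (∀ X : C,
          (upUnit T (i + 1) (n - i - 1) X
              ≫ (upFun T (i + 1) (n - i - 1)).map (lowUnit T i X))
            ≫ eqToHom (Functor.congr_obj hF X) = lowUnit T n X) ∧
        (∀ X : C,
          eqToHom (((Functor.congr_obj hF
                ((lowFun T i ⋙ upFun T (i + 1) (n - i - 1)).obj X)).trans
              (congrArg (lowFun T n).obj (Functor.congr_obj hF X))).symm)
            ≫ ((upFun T (i + 1) (n - i - 1)).map
                  (lowUpLaw T ℓ (i + 1) (n - i - 1) i ((lowFun T i).obj X))
                ≫ upMul T ℓ (i + 1) (n - i - 1) ((lowFun T i).obj ((lowFun T i).obj X))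
                ≫ (upFun T (i + 1) (n - i - 1)).map (lowMul T ℓ i X))
            ≫ eqToHom (Functor.congr_obj hF X) = lowMul T ℓ n X) := by
  intro i hi1 hi2
  obtain ⟨m, rfl⟩ : ∃ m, n = i + 1 + m := ⟨n - i - 1, by omega⟩
  have hm : i + 1 + m - i - 1 = m := by omega
  rw [hm]
  refine ⟨low_monad (i+1+m) T ℓ hlaw hYB i (by omega),
    up_monad (i+1+m) T ℓ hlaw hYB m (i+1) (by omega),
    lowUpLaw_law (i+1+m) T ℓ hlaw hYB i (i+1) m (by omega) (by omega),
    hFun T m i, fun X => ?_, fun X => ?_⟩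
  · rw [compatUnit0 T m i X, Category.assoc, eqToHom_trans, eqToHom_refl,
      Category.comp_id]
  · rw [compatMul0 (i+1+m) T ℓ hlaw hYB m i (by omega) X]
    simp only [Category.assoc, eqToHom_trans_assoc, eqToHom_trans, eqToHom_refl,
      Category.comp_id, Category.id_comp]
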